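/- In a distributive continuous lattice-ordered structure: if L is a lattice whose underlying meet-structure is a distributive continuous semilattice, then the algebraic convexity of sublattices is S₂, i.e. any two distinct points can be separated by complementary halfspaces; concretely, if x ≰ y then there is a coprime element p with p ≤ x and p ≰ y, so ↑p is a sublattice with sublattice complement separating x from y. -/
import Mathlib


/-- A filtered (downward directed, nonempty) subset. -/
def IsFiltered' {L : Type*} [Preorder L] (F : Set L) : Prop :=
  F.Nonempty ∧ ∀ a ∈ F, ∀ b ∈ F, ∃ c ∈ F, c ≤ a ∧ c ≤ b

/-- `y` is way above `x`: for every filtered set `F` with an infimum `i`,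
`i ≤ x` implies `y` is above some element of `F`. -/
def WayAbove {L : Type*} [Preorder L] (y x : L) : Prop :=
  ∀ F : Set L, IsFiltered' F → ∀ i : L, IsGLB F i → i ≤ x → ∃ f ∈ F, f ≤ y

lemma WayAbove.le' {L : Type*} [Preorder L] {w t : L} (h : WayAbove w t) : t ≤ w := by
  obtain ⟨f, hf, hfw⟩ := h {t}
    ⟨⟨t, rfl⟩, fun a ha b hb => ⟨t, rfl, le_of_eq ha.symm, le_of_eq hb.symm⟩⟩
    t isGLB_singleton le_rfl
  rw [Set.mem_singleton_iff] at hf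
  exact hf ▸ hfw

/-- On a distributive lattice whose underlying meet-semilattice is a continuous
semilattice (filtered infima exist and each point is the filtered infimum of the
elements way above it), the algebraic convexity of sublattices is `S₂`: if `x ≰ y`
there is a coprime `p` with `p ≤ x`, `p ≰ y`, and `↑p` is a halfspace (a sublattice
with sublattice complement) separating `x` from `y`. -/
theorem algConvexity_S2_of_distributive_continuous {L : Type*} [DistribLattice L]
    (hdom : ∀ F : Set L, IsFiltered' F → ∃ i : L, IsGLB F i)
    (hcont : ∀ x : L, IsFiltered' {y | WayAbove y x} ∧ IsGLB {y | WayAbove y x} x) :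
    ∀ x y : L, ¬ x ≤ y →
      ∃ p : L, (∀ a b : L, p ≤ a ⊔ b → p ≤ a ∨ p ≤ b) ∧ p ≤ x ∧ ¬ p ≤ y ∧
        x ∈ Set.Ici p ∧ y ∉ Set.Ici p ∧
        (∀ a ∈ Set.Ici p, ∀ b ∈ Set.Ici p, a ⊔ b ∈ Set.Ici p ∧ a ⊓ b ∈ Set.Ici p) ∧
        (∀ a ∈ (Set.Ici p)ᶜ, ∀ b ∈ (Set.Ici p)ᶜ, a ⊔ b ∈ (Set.Ici p)ᶜ ∧ a ⊓ b ∈ (Set.Ici p)ᶜ) := by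
  intro x y hxy
  -- Step: above any t with ¬ x ≤ t there is w way above t with ¬ x ≤ w.
  have step : ∀ t : L, ¬ x ≤ t → ∃ w : L, WayAbove w t ∧ ¬ x ≤ w := by
    intro t ht
    by_contra h
    push_neg at h
    have hlb : x ∈ lowerBounds {w : L | WayAbove w t} := by
      intro w hw
      by_contra hxw
      exact hxw (h w hw)
    exact ht ((hcont t).2.2 hlb)
  choose f hf1 hf2 using step
  -- the sequence
  let a : ℕ → {t : L // ¬ x ≤ t} :=
    fun n => Nat.rec ⟨y, hxy⟩ (fun _ t => ⟨f t.1 t.2, hf2 t.1 t.2⟩) n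
  have ha0 : (a 0).1 = y := rfl
  have haW : ∀ n, WayAbove (a (n+1)).1 (a n).1 := fun n => hf1 _ _
  have hax : ∀ n, ¬ x ≤ (a n).1 := fun n => (a n).2
  have hmono : Monotone fun n => (a n).1 :=
    monotone_nat_of_le_succ fun n => (haW n).le'
  -- Zorn on the order dual to get a minimal element of T
  set T : Set Lᵒᵈ :=
    {t | OrderDual.ofDual t ≤ x ∧ ∀ n, ¬ OrderDual.ofDual t ≤ (a n).1} with hT
  have hxT : OrderDual.toDual x ∈ T := ⟨le_rfl, hax⟩
  have hchain : ∀ c ⊆ T, IsChain (· ≤ ·) c → ∀ y₀ ∈ c, ∃ ub ∈ T, ∀ z ∈ c, z ≤ ub := by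
    intro c hcT hc y₀ hy₀
    set C : Set L := {t : L | OrderDual.toDual t ∈ c} with hC
    have hCfil : IsFiltered' C := by
      refine ⟨⟨OrderDual.ofDual y₀, hy₀⟩, ?_⟩
      intro u hu v hv
      rcases eq_or_ne (OrderDual.toDual u) (OrderDual.toDual v) with h | h
      · exact ⟨u, hu, le_rfl, le_of_eq (congrArg OrderDual.ofDual h)⟩
      · rcases hc hu hv h with h' | h'
        · exact ⟨v, hv, h', le_rfl⟩
        · exact ⟨u, hu, le_rfl, h'⟩
    obtain ⟨i, hi⟩ := hdom C hCfil
    refine ⟨OrderDual.toDual i, ⟨?_, ?_⟩, ?_⟩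
    · exact le_trans (hi.1 hy₀) (hcT hy₀).1
    · intro n hin
      obtain ⟨g, hg, hgle⟩ := haW n C hCfil i hi hin
      exact (hcT hg).2 (n + 1) hgle
    · intro z hz
      exact hi.1 hz
  obtain ⟨p, -, hpT, hpmax⟩ := zorn_le_nonempty₀ T hchain (OrderDual.toDual x) hxT
  set P : L := OrderDual.ofDual p with hP
  have hPx : P ≤ x := hpT.1
  have hPa : ∀ n, ¬ P ≤ (a n).1 := hpT.2
  -- coprimality
  have hcop : ∀ u v : L, P ≤ u ⊔ v → P ≤ u ∨ P ≤ v := by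
    intro u v huv
    by_contra h
    push_neg at h
    obtain ⟨hu, hv⟩ := h
    have key : ∀ w : L, ¬ P ≤ w → ∃ n, w ⊓ P ≤ (a n).1 := by
      intro w hw
      by_contra hn
      push_neg at hn
      have hmem : OrderDual.toDual (w ⊓ P) ∈ T := ⟨le_trans inf_le_right hPx, hn⟩
      have h2 : P ≤ w ⊓ P := hpmax hmem (inf_le_right : w ⊓ P ≤ P)
      exact hw (le_trans h2 inf_le_left)
    obtain ⟨n, hn⟩ := key u hu
    obtain ⟨m, hm⟩ := key v hv
    have hun : u ⊓ P ≤ (a (max n m)).1 := le_trans hn (hmono (le_max_left n m))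
    have hvm : v ⊓ P ≤ (a (max n m)).1 := le_trans hm (hmono (le_max_right n m))
    have : P ≤ (a (max n m)).1 := by
      have hP' : P = (P ⊓ u) ⊔ (P ⊓ v) := by
        rw [← inf_sup_left]
        exact (inf_eq_left.mpr huv).symm
      calc P = (P ⊓ u) ⊔ (P ⊓ v) := hP'
        _ ≤ (a (max n m)).1 := sup_le (by rwa [inf_comm]) (by rwa [inf_comm])
    exact hPa (max n m) this
  have hPy : ¬ P ≤ y := ha0 ▸ hPa 0
  refine ⟨P, hcop, hPx, hPy, hPx, hPy, ?_, ?_⟩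
  · intro u hu v hv
    exact ⟨le_trans hu le_sup_left, le_inf hu hv⟩
  · intro u hu v hv
    refine ⟨?_, ?_⟩
    · intro hsup
      rcases hcop u v hsup with h | h
      · exact hu h
      · exact hv h
    · intro hinf
      exact hu (le_trans hinf inf_le_left)
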